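/- With the setup of the previous lemma, the Lagrangian dual of the program min F₁ (dualizing the constraints z^k η = y^k with multipliers λ^k) has dual objective F₁*(λ) = min over k of ( ηᵀλ^k − (f^k)*(λ^k, 0) ), where (f^k)* is the convex conjugate of f^k. -/

import Mathlib

open scoped BigOperators

/-- Dual pairing on `ℝ × (Fin m → ℝ)`. -/
noncomputable def pairR {m : ℕ} (p q : ℝ × (Fin m → ℝ)) : ℝ :=
  p.1 * q.1 + ∑ i, p.2 i * q.2 i

/-- Fenchel convex conjugate of a function on `ℝ × (Fin m → ℝ)`. -/
noncomputable def econj2 {m : ℕ} (f : ℝ × (Fin m → ℝ) → EReal)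
    (ν : ℝ × (Fin m → ℝ)) : EReal :=
  ⨆ x : ℝ × (Fin m → ℝ), ((pairR ν x : ℝ) : EReal) - f x

/-- The l.s.c. perspective of `f`, defined via the biconjugate. -/
noncomputable def epersp2 {m : ℕ} (f : ℝ × (Fin m → ℝ) → EReal) (z : ℝ)
    (w : ℝ × (Fin m → ℝ)) : EReal :=
  ⨆ p : {p : ℝ × (ℝ × (Fin m → ℝ)) // ((p.1 : EReal) + econj2 f p.2 ≤ 0)},
    ((z * p.1.1 + pairR w p.1.2 : ℝ) : EReal)

/-- Convexity for extended-real-valued functions on `ℝ × (Fin m → ℝ)`. -/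
def EConvex2 {m : ℕ} (f : ℝ × (Fin m → ℝ) → EReal) : Prop :=
  ∀ x y : ℝ × (Fin m → ℝ), ∀ a b : ℝ, 0 ≤ a → 0 ≤ b → a + b = 1 →
    f (a • x + b • y) ≤ (a : EReal) * f x + (b : EReal) * f y

/-- Properness: never `⊥` and not identically `⊤`. -/
def EProper2 {m : ℕ} (f : ℝ × (Fin m → ℝ) → EReal) : Prop :=
  (∀ x, f x ≠ ⊥) ∧ ∃ x, f x ≠ ⊤

-- lower bound lemma
lemma exists_lb {m : ℕ} (f : ℝ × (Fin m → ℝ) → EReal)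
    (hbot : ∀ x, f x ≠ ⊥) (hlsc : LowerSemicontinuous f)
    (hbdd : Bornology.IsBounded {x | f x ≠ ⊤}) :
    ∃ c : ℝ, ∀ x, (c : EReal) ≤ f x := by
  have hK : IsCompact (closure {x | f x ≠ ⊤}) := hbdd.isCompact_closure
  have hcov : closure {x | f x ≠ ⊤} ⊆ ⋃ n : ℕ, f ⁻¹' Set.Ioi (-(n:ℝ) : EReal) := by
    intro x _
    have hb : f x ≠ ⊥ := hbot x
    have : ∃ n : ℕ, (-(n:ℝ) : EReal) < f x := by
      obtain ⟨r, _, hr2⟩ := EReal.exists_between_coe_real (bot_lt_iff_ne_bot.2 hb)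
      obtain ⟨n, hn⟩ := exists_nat_gt (-r)
      refine ⟨n, lt_of_lt_of_le ?_ (le_of_lt hr2)⟩
      exact_mod_cast (by linarith : -(n:ℝ) < r)
    obtain ⟨n, hn⟩ := this
    exact Set.mem_iUnion.2 ⟨n, hn⟩
  obtain ⟨t, ht⟩ := hK.elim_finite_subcover _
    (fun n : ℕ => hlsc.isOpen_preimage (-(n:ℝ) : EReal)) hcov
  refine ⟨-(t.sup id : ℕ), fun x => ?_⟩
  by_cases hx : f x = ⊤
  · simp [hx]
  · have hxc : x ∈ closure {x | f x ≠ ⊤} := subset_closure hx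
    obtain ⟨n, hn, hxn⟩ := Set.mem_iUnion₂.1 (ht hxc)
    have h1 : (-(n:ℝ) : EReal) < f x := hxn
    have h2 : ((-(t.sup id : ℕ) : ℝ) : EReal) ≤ (-(n:ℝ) : EReal) := by
      have : (n : ℝ) ≤ (t.sup id : ℕ) := by
        exact_mod_cast Finset.le_sup (f := id) hn
      exact_mod_cast (by linarith : -((t.sup id : ℕ) : ℝ) ≤ -(n:ℝ))
    exact le_of_lt (lt_of_le_of_lt h2 h1)

-- pairR bound
lemma pairR_le {m : ℕ} (ν x : ℝ × (Fin m → ℝ)) :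
    pairR ν x ≤ (|ν.1| + ∑ i, |ν.2 i|) * ‖x‖ := by
  have h1 : ν.1 * x.1 ≤ |ν.1| * ‖x‖ := by
    calc ν.1 * x.1 ≤ |ν.1 * x.1| := le_abs_self _
    _ = |ν.1| * |x.1| := abs_mul _ _
    _ ≤ |ν.1| * ‖x‖ := by
        apply mul_le_mul_of_nonneg_left _ (abs_nonneg _)
        exact (norm_fst_le x)
  have h2 : ∀ i, ν.2 i * x.2 i ≤ |ν.2 i| * ‖x‖ := by
    intro i
    calc ν.2 i * x.2 i ≤ |ν.2 i * x.2 i| := le_abs_self _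
    _ = |ν.2 i| * |x.2 i| := abs_mul _ _
    _ ≤ |ν.2 i| * ‖x‖ := by
        apply mul_le_mul_of_nonneg_left _ (abs_nonneg _)
        exact le_trans (norm_le_pi_norm x.2 i) (norm_snd_le x)
  calc pairR ν x ≤ |ν.1| * ‖x‖ + ∑ i, |ν.2 i| * ‖x‖ := by
        exact add_le_add h1 (Finset.sum_le_sum fun i _ => h2 i)
    _ = (|ν.1| + ∑ i, |ν.2 i|) * ‖x‖ := by rw [add_mul, Finset.sum_mul]

-- conjugate is finite
lemma econj2_lt_top {m : ℕ} (f : ℝ × (Fin m → ℝ) → EReal)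
    (hbot : ∀ x, f x ≠ ⊥) (hlsc : LowerSemicontinuous f)
    (hbdd : Bornology.IsBounded {x | f x ≠ ⊤}) (ν : ℝ × (Fin m → ℝ)) :
    econj2 f ν ≠ ⊤ := by
  obtain ⟨c, hc⟩ := exists_lb f hbot hlsc hbdd
  obtain ⟨R, hR⟩ := hbdd.exists_norm_le
  set C : ℝ := (|ν.1| + ∑ i, |ν.2 i|)
  have hC : 0 ≤ C := by positivity
  have : econj2 f ν ≤ ((C * max R 0 - c : ℝ) : EReal) := by
    refine iSup_le fun x => ?_
    by_cases hx : f x = ⊤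
    · rw [hx]
      simp [EReal.sub_top]
    · have hxx : ‖x‖ ≤ max R 0 := le_max_of_le_left (hR x hx)
      have hp : pairR ν x ≤ C * max R 0 :=
        le_trans (pairR_le ν x) (mul_le_mul_of_nonneg_left hxx hC)
      calc ((pairR ν x : ℝ) : EReal) - f x ≤ ((C * max R 0 : ℝ) : EReal) - ((c:ℝ):EReal) := by
            apply EReal.sub_le_sub (by exact_mod_cast hp) (hc x)
        _ = ((C * max R 0 - c : ℝ) : EReal) := by rw [← EReal.coe_sub]
  exact ne_top_of_le_ne_top (EReal.coe_ne_top _) this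

lemma econj2_ne_bot {m : ℕ} (f : ℝ × (Fin m → ℝ) → EReal)
    (htop : ∃ x, f x ≠ ⊤) (hbot : ∀ x, f x ≠ ⊥) (ν : ℝ × (Fin m → ℝ)) :
    econj2 f ν ≠ ⊥ := by
  obtain ⟨x₀, hx₀⟩ := htop
  have h : ((pairR ν x₀ : ℝ) : EReal) - f x₀ ≤ econj2 f ν :=
    le_iSup (fun x => ((pairR ν x : ℝ) : EReal) - f x) x₀
  refine fun hb => ?_
  rw [hb, le_bot_iff] at h
  have hb' : f x₀ = (((f x₀).toReal : ℝ) : EReal) := (EReal.coe_toReal hx₀ (hbot x₀)).symm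
  rw [hb'] at h
  rw [← EReal.coe_sub] at h
  exact EReal.coe_ne_bot _ h


-- the canonical element of the constraint set, given finiteness of econj2 at ν
lemma mem_S {m : ℕ} (f : ℝ × (Fin m → ℝ) → EReal) (ν : ℝ × (Fin m → ℝ)) (r : ℝ)
    (hr : econj2 f ν = (r : EReal)) :
    (((-r : ℝ) : EReal) + econj2 f ν ≤ 0) := by
  rw [hr, ← EReal.coe_add]
  simp

lemma epersp2_ge {m : ℕ} (f : ℝ × (Fin m → ℝ) → EReal) (z : ℝ)
    (w : ℝ × (Fin m → ℝ)) (ν : ℝ × (Fin m → ℝ)) (r : ℝ)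
    (hr : econj2 f ν = (r : EReal)) :
    ((z * (-r) + pairR w ν : ℝ) : EReal) ≤ epersp2 f z w :=
  le_iSup (fun p : {p : ℝ × (ℝ × (Fin m → ℝ)) // ((p.1 : EReal) + econj2 f p.2 ≤ 0)} =>
    ((z * p.1.1 + pairR w p.1.2 : ℝ) : EReal)) ⟨(-r, ν), mem_S f ν r hr⟩

lemma epersp2_zero {m : ℕ} (f : ℝ × (Fin m → ℝ) → EReal) (ν : ℝ × (Fin m → ℝ)) (r : ℝ)
    (hr : econj2 f ν = (r : EReal)) :
    epersp2 f 0 (0, (0 : Fin m → ℝ)) = 0 := by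
  apply le_antisymm
  · refine iSup_le fun p => ?_
    simp [pairR]
  · have h := epersp2_ge f 0 (0, (0 : Fin m → ℝ)) ν r hr
    simpa [pairR] using h

lemma epersp2_one_le {m : ℕ} (f : ℝ × (Fin m → ℝ) → EReal) (x : ℝ × (Fin m → ℝ)) :
    epersp2 f 1 x ≤ f x := by
  refine iSup_le fun p => ?_
  obtain ⟨⟨μ, ν⟩, hp⟩ := p
  by_cases hx : f x = ⊤
  · rw [hx]; exact le_top
  have hxb : f x ≠ ⊥ → True := fun _ => trivial
  by_cases hxb : f x = ⊥
  ·
    exfalso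
    have h1 : ((pairR ν x : ℝ) : EReal) - f x ≤ econj2 f ν :=
      le_iSup (fun y => ((pairR ν y : ℝ) : EReal) - f y) x
    rw [hxb] at h1
    rw [EReal.coe_sub_bot, top_le_iff] at h1
    rw [h1] at hp
    rw [EReal.coe_add_top] at hp
    exact absurd hp (by simp)
  · set v : ℝ := (f x).toReal with hv
    have hfx : f x = (v : EReal) := (EReal.coe_toReal hx hxb).symm
    have h1 : ((pairR ν x : ℝ) : EReal) - f x ≤ econj2 f ν :=
      le_iSup (fun y => ((pairR ν y : ℝ) : EReal) - f y) x
    have h2 : (μ : EReal) + (((pairR ν x : ℝ) : EReal) - f x) ≤ 0 := by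
      calc (μ : EReal) + (((pairR ν x : ℝ) : EReal) - f x) ≤ (μ : EReal) + econj2 f ν := by
            exact add_le_add_right h1 _
        _ ≤ 0 := hp
    rw [hfx, ← EReal.coe_sub, ← EReal.coe_add] at h2
    have h3 : μ + (pairR ν x - v) ≤ 0 := by exact_mod_cast h2
    have h4 : 1 * μ + pairR x ν ≤ v := by
      have : pairR x ν = pairR ν x := by simp [pairR, mul_comm]
      rw [this]; linarith
    rw [hfx]
    exact_mod_cast h4

lemma ecoe_sum {ι : Type*} (s : Finset ι) (g : ι → ℝ) :
    ((∑ i ∈ s, g i : ℝ) : EReal) = ∑ i ∈ s, ((g i : ℝ) : EReal) :=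
  map_sum (⟨⟨Real.toEReal, EReal.coe_zero⟩, EReal.coe_add⟩ : ℝ →+ EReal) g s

lemma le_coe_of_forall_eps (a : EReal) (b : ℝ)
    (h : ∀ ε : ℝ, 0 < ε → a ≤ ((b + ε : ℝ) : EReal)) : a ≤ (b : EReal) := by
  by_contra h'
  push_neg at h'
  obtain ⟨q, hq1, hq2⟩ := EReal.exists_between_coe_real h'
  have hb : b < q := by exact_mod_cast hq1
  have := h (q - b) (by linarith)
  rw [show b + (q - b) = q by ring] at this
  exact absurd hq2 (not_lt.2 this)


/-- the Lagrangian dual objective of `min F₁` (dualizing the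
constraints `z^k η = y^k` with multipliers `λ^k`) equals
`min_k ( η λ^k − (f^k)*(λ^k, 0) )`. -/
theorem lagrangian_dual_F1 {m K : ℕ} (f : Fin K → ℝ × (Fin m → ℝ) → EReal)
    (hproper : ∀ k, EProper2 (f k)) (hconv : ∀ k, EConvex2 (f k))
    (hlsc : ∀ k, LowerSemicontinuous (f k))
    (hbdd : ∀ k, Bornology.IsBounded {x | f k x ≠ ⊤})
    (η : ℝ) (lam : Fin K → ℝ) :
    (⨅ p : {p : (Fin K → ℝ) × (Fin K → ℝ) × (Fin K → Fin m → ℝ) //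
        p.1 ∈ stdSimplex ℝ (Fin K)},
      ∑ k, (epersp2 (f k) (p.1.1 k) (p.1.2.1 k, p.1.2.2 k)
        + ((lam k * (p.1.1 k * η - p.1.2.1 k) : ℝ) : EReal)))
      = ⨅ k, (((η * lam k : ℝ) : EReal) - econj2 (f k) (lam k, 0)) := by
  classical
  have hr : ∀ k : Fin K, ∃ r : ℝ, econj2 (f k) (lam k, 0) = (r : EReal) := by
    intro k
    have h1 := econj2_lt_top (f k) (hproper k).1 (hlsc k) (hbdd k) (lam k, 0)
    have h2 := econj2_ne_bot (f k) (hproper k).2 (hproper k).1 (lam k, 0)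
    exact ⟨(econj2 (f k) (lam k, 0)).toReal, (EReal.coe_toReal h1 h2).symm⟩
  choose r hrk using hr
  have hRHS : ∀ k, ((η * lam k : ℝ) : EReal) - econj2 (f k) (lam k, 0)
      = ((η * lam k - r k : ℝ) : EReal) := by
    intro k; rw [hrk k, ← EReal.coe_sub]
  apply le_antisymm
  · -- LHS ≤ RHS
    apply le_iInf
    intro k₀
    rw [hRHS k₀]
    apply le_coe_of_forall_eps
    intro ε hε
    -- find an approximate maximizer for the conjugate
    have hlt : ((r k₀ - ε : ℝ) : EReal) < econj2 (f k₀) (lam k₀, 0) := by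
      rw [hrk k₀]
      exact_mod_cast (by linarith : r k₀ - ε < r k₀)
    unfold econj2 at hlt
    obtain ⟨x, hx⟩ := lt_iSup_iff.1 hlt
    have hpair : pairR (lam k₀, (0 : Fin m → ℝ)) x = lam k₀ * x.1 := by
      simp [pairR]
    have hxt : f k₀ x ≠ ⊤ := by
      intro h
      rw [h, EReal.sub_top] at hx
      exact absurd hx (by simp)
    have hxb : f k₀ x ≠ ⊥ := (hproper k₀).1 x
    set v : ℝ := (f k₀ x).toReal with hv
    have hfx : f k₀ x = (v : EReal) := (EReal.coe_toReal hxt hxb).symm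
    rw [hfx, hpair, ← EReal.coe_sub] at hx
    have hvlt : r k₀ - ε < lam k₀ * x.1 - v := by exact_mod_cast hx
    -- build the primal point
    set z : Fin K → ℝ := fun k => if k = k₀ then 1 else 0 with hz
    set y : Fin K → ℝ := fun k => if k = k₀ then x.1 else 0 with hy
    set w : Fin K → Fin m → ℝ := fun k => if k = k₀ then x.2 else 0 with hw
    have hmem : z ∈ stdSimplex ℝ (Fin K) := by
      constructor
      · intro k; dsimp [z]; split <;> norm_num
      · simp [z]
    refine le_trans (iInf_le _ ⟨(z, y, w), hmem⟩) ?_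
    rw [Finset.sum_eq_single_of_mem k₀ (Finset.mem_univ k₀) ?side]
    · -- main term
      have h1 : epersp2 (f k₀) (z k₀) (y k₀, w k₀) ≤ (v : EReal) := by
        simp only [hz, hy, hw, if_pos rfl]
        rw [← hfx]
        exact le_trans (le_of_eq (by rw [Prod.mk.eta])) (epersp2_one_le (f k₀) x)
      have h2 : epersp2 (f k₀) (z k₀) (y k₀, w k₀)
          + ((lam k₀ * (z k₀ * η - y k₀) : ℝ) : EReal)
          ≤ (v : EReal) + ((lam k₀ * (z k₀ * η - y k₀) : ℝ) : EReal) :=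
        add_le_add_left h1 _
      refine le_trans h2 ?_
      rw [← EReal.coe_add]
      have : v + lam k₀ * (z k₀ * η - y k₀) ≤ η * lam k₀ - r k₀ + ε := by
        simp only [hz, hy, if_pos rfl]
        nlinarith [hvlt]
      exact_mod_cast this
    · intro k _ hk
      have hzk : z k = 0 := by simp [hz, hk]
      have hyk : y k = 0 := by simp [hy, hk]
      have hwk : w k = 0 := by simp [hw, hk]
      simp only
      rw [hzk, hyk, hwk, epersp2_zero (f k) (lam k, 0) (r k) (hrk k)]
      norm_num
  · -- RHS ≤ LHS
    apply le_iInf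
    rintro ⟨⟨z, y, w⟩, hmem⟩
    have hsum1 : ∑ k, z k = 1 := hmem.2
    have hK : 0 < K := by
      rcases Nat.eq_zero_or_pos K with h | h
      · subst h; simp at hsum1
      · exact h
    haveI : Nonempty (Fin K) := Fin.pos_iff_nonempty.1 hK
    set a : Fin K → ℝ := fun k => η * lam k - r k with ha
    obtain ⟨kmin, _, hkmin⟩ := Finset.exists_min_image Finset.univ a Finset.univ_nonempty
    have step1 : ∀ k, ((z k * a k : ℝ) : EReal)
        ≤ epersp2 (f k) (z k) (y k, w k) + ((lam k * (z k * η - y k) : ℝ) : EReal) := by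
      intro k
      have hg := epersp2_ge (f k) (z k) (y k, w k) (lam k, 0) (r k) (hrk k)
      have hg2 := add_le_add_left hg ((lam k * (z k * η - y k) : ℝ) : EReal)
      refine le_trans (le_of_eq ?_) hg2
      rw [← EReal.coe_add]
      have hp : pairR (y k, w k) (lam k, (0 : Fin m → ℝ)) = y k * lam k := by
        simp [pairR]
      rw [hp]
      norm_cast
      simp only [ha]
      ring
    have step2 : ((∑ k, z k * a k : ℝ) : EReal)
        ≤ ∑ k, (epersp2 (f k) (z k) (y k, w k)
            + ((lam k * (z k * η - y k) : ℝ) : EReal)) := by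
      rw [ecoe_sum]
      exact Finset.sum_le_sum fun k _ => step1 k
    have step3 : a kmin ≤ ∑ k, z k * a k := by
      calc a kmin = (∑ k, z k) * a kmin := by rw [hsum1, one_mul]
        _ = ∑ k, z k * a kmin := Finset.sum_mul ..
        _ ≤ ∑ k, z k * a k := Finset.sum_le_sum fun k _ =>
            mul_le_mul_of_nonneg_left (hkmin k (Finset.mem_univ k)) (hmem.1 k)
    refine le_trans (iInf_le _ kmin) ?_
    rw [hRHS kmin]
    refine le_trans ?_ step2
    exact_mod_cast step3
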